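/- Let M = (1/2)[[1,0],[1,0]] be the 2×2 real matrix representing P_V P_U where U = span{(1,0)} and V = span{(1,1)} in ℝ². Then the modulus of averagedness of M equals (3 + √2)/7; concretely, for κ ∈ (0,1], the inequality ‖Mz‖² + (1-2κ)‖z‖² ≤ 2(1-κ)⟨z, Mz⟩ holds for all z ∈ ℝ² if and only if κ ≥ (3 + √2)/7. -/

import Mathlib

set_option maxHeartbeats 1000000
open Set RealInnerProductSpace

def Nonexpansive (T : EuclideanSpace ℝ (Fin 2) → EuclideanSpace ℝ (Fin 2)) : Prop :=
  ∀ x y, ‖T x - T y‖ ≤ ‖x - y‖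

def IsAveraged (T : EuclideanSpace ℝ (Fin 2) → EuclideanSpace ℝ (Fin 2)) (κ : ℝ) : Prop :=
  ∃ N : EuclideanSpace ℝ (Fin 2) → EuclideanSpace ℝ (Fin 2),
    Nonexpansive N ∧ ∀ x, T x = (1 - κ) • x + κ • N x

lemma inner_two (z w : EuclideanSpace ℝ (Fin 2)) : ⟪z, w⟫ = z 0 * w 0 + z 1 * w 1 := by
  simp [PiLp.inner_apply, Fin.sum_univ_two, RCLike.inner_apply, conj_trivial]
  ring

lemma normsq_two (z : EuclideanSpace ℝ (Fin 2)) : ‖z‖ ^ 2 = z 0 ^ 2 + z 1 ^ 2 := by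
  rw [← real_inner_self_eq_norm_sq, inner_two]; ring

lemma sqle {a b : ℝ} (ha : 0 ≤ a) (hb : 0 ≤ b) (h : a ^ 2 ≤ b ^ 2) : a ≤ b := by nlinarith

theorem modulus_example (M : EuclideanSpace ℝ (Fin 2) → EuclideanSpace ℝ (Fin 2))
    (hM : M = fun z => (WithLp.toLp 2 (fun _ : Fin 2 => z 0 / 2) : EuclideanSpace ℝ (Fin 2))) :
    IsLeast {κ : ℝ | κ ∈ Icc (0 : ℝ) 1 ∧ IsAveraged M κ} ((3 + Real.sqrt 2) / 7) ∧
      ∀ κ ∈ Ioc (0 : ℝ) 1,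
        ((∀ z : EuclideanSpace ℝ (Fin 2),
            ‖M z‖ ^ 2 + (1 - 2 * κ) * ‖z‖ ^ 2 ≤ 2 * (1 - κ) * ⟪z, M z⟫)
          ↔ (3 + Real.sqrt 2) / 7 ≤ κ) := by
  have hMz : ∀ (z : EuclideanSpace ℝ (Fin 2)) (i : Fin 2), M z i = z 0 / 2 := by
    intro z i; rw [hM]
  set s := Real.sqrt 2 with hsdef
  have hs2 : s ^ 2 = 2 := Real.sq_sqrt (by norm_num)
  have hs0 : (0:ℝ) ≤ s := Real.sqrt_nonneg 2
  have hs1 : (1:ℝ) ≤ s := by nlinarith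
  have hs3 : s ≤ 3/2 := by nlinarith
  -- coordinate form of the key inequality
  have hP : ∀ κ : ℝ, 0 < κ → κ ≤ 1 →
      ((∀ z : EuclideanSpace ℝ (Fin 2),
          ‖M z‖ ^ 2 + (1 - 2 * κ) * ‖z‖ ^ 2 ≤ 2 * (1 - κ) * ⟪z, M z⟫)
        ↔ (3 + s) / 7 ≤ κ) := by
    intro κ hκ hκ1
    constructor
    · intro h
      have hz := h ((WithLp.equiv 2 (Fin 2 → ℝ)).symm ![-s, 1])
      rw [normsq_two, normsq_two, inner_two] at hz
      simp only [hMz, WithLp.equiv_symm_apply, PiLp.toLp_apply, Matrix.cons_val_zero,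
        Matrix.cons_val_one, Matrix.head_cons] at hz
      nlinarith [hz]
    · intro hκge z
      rw [normsq_two, normsq_two, inner_two]
      simp only [hMz]
      set x := z 0; set y := z 1
      have h7 : 3 + s ≤ 7 * κ := by
        have := (div_le_iff₀ (by norm_num : (0:ℝ) < 7)).mp hκge; linarith
      have hA : 0 ≤ s * (2*κ - 1) - (1 - κ) := by
        nlinarith [mul_nonneg hs0 (by linarith : (0:ℝ) ≤ 7*κ - 3 - s)]
      have hhalf : 1/2 ≤ κ := by linarith
      have hB : 0 ≤ s * (2*κ - 1) + (1 - κ) := by nlinarith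
      have hC : 0 ≤ 2 * (2*κ - 1)^2 - (1 - κ)^2 := by nlinarith [mul_nonneg hA hB]
      nlinarith [sq_nonneg ((2*κ - 1) * x + (1 - κ) * y), mul_nonneg hC (sq_nonneg y),
        sq_nonneg x, sq_nonneg y]
  -- equivalence between IsAveraged and the inequality, for 0 < κ
  have hAvg : ∀ κ : ℝ, 0 < κ →
      (IsAveraged M κ ↔ ∀ z : EuclideanSpace ℝ (Fin 2),
        ‖M z‖ ^ 2 + (1 - 2 * κ) * ‖z‖ ^ 2 ≤ 2 * (1 - κ) * ⟪z, M z⟫) := by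
    intro κ hκ
    have key_iff : ∀ w : EuclideanSpace ℝ (Fin 2),
        (‖M w - (1 - κ) • w‖ ≤ κ * ‖w‖ ↔
          ‖M w‖ ^ 2 + (1 - 2 * κ) * ‖w‖ ^ 2 ≤ 2 * (1 - κ) * ⟪w, M w⟫) := by
      intro w
      have hc0 : (M w - (1 - κ) • w) 0 = w 0 / 2 - (1 - κ) * w 0 := by
        simp [hMz, PiLp.sub_apply, PiLp.smul_apply, smul_eq_mul]
      have hc1 : (M w - (1 - κ) • w) 1 = w 0 / 2 - (1 - κ) * w 1 := by
        simp [hMz, PiLp.sub_apply, PiLp.smul_apply, smul_eq_mul]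
      constructor
      · intro h
        have hsq : ‖M w - (1 - κ) • w‖ ^ 2 ≤ (κ * ‖w‖) ^ 2 :=
          pow_le_pow_left₀ (norm_nonneg _) h 2
        rw [normsq_two, mul_pow, normsq_two] at hsq
        rw [hc0, hc1] at hsq
        rw [normsq_two, normsq_two, inner_two]
        simp only [hMz]
        nlinarith [hsq]
      · intro h
        apply sqle (norm_nonneg _) (mul_nonneg hκ.le (norm_nonneg _))
        rw [normsq_two, mul_pow, normsq_two, hc0, hc1]
        rw [normsq_two, normsq_two, inner_two] at h
        simp only [hMz] at h
        nlinarith [h]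
    constructor
    · rintro ⟨N, hN, hNeq⟩ z
      rw [← key_iff]
      have hM0 : M 0 = 0 := by
        ext i; rw [hMz]; simp
      have hN0 : N 0 = 0 := by
        have := hNeq 0
        rw [hM0] at this
        have h2 : κ • N 0 = 0 := by
          have : (0 : EuclideanSpace ℝ (Fin 2)) = (1-κ) • (0 : EuclideanSpace ℝ (Fin 2)) + κ • N 0 := this
          simpa using this.symm
        rcases smul_eq_zero.mp h2 with h | h
        · exact absurd h hκ.ne'
        · exact h
      have hvec : M z - (1 - κ) • z = κ • N z := by
        rw [hNeq z]; abel
      rw [hvec, norm_smul, Real.norm_eq_abs, abs_of_pos hκ]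
      have := hN z 0
      rw [hN0, sub_zero, sub_zero] at this
      exact mul_le_mul_of_nonneg_left this hκ.le
    · intro h
      refine ⟨fun x => κ⁻¹ • (M x - (1 - κ) • x), ?_, ?_⟩
      · intro x y
        have hMlin : M x - M y = M (x - y) := by
          ext i
          simp [hMz, PiLp.sub_apply]
          ring
        have hvec : κ • (κ⁻¹ • (M x - (1 - κ) • x) - κ⁻¹ • (M y - (1 - κ) • y))
            = M (x - y) - (1 - κ) • (x - y) := by
          rw [smul_sub, smul_inv_smul₀ hκ.ne', smul_inv_smul₀ hκ.ne', ← hMlin, smul_sub]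
          abel
        have key : ‖M (x - y) - (1 - κ) • (x - y)‖ ≤ κ * ‖x - y‖ :=
          (key_iff (x - y)).mpr (h (x - y))
        have hnn : κ * ‖κ⁻¹ • (M x - (1 - κ) • x) - κ⁻¹ • (M y - (1 - κ) • y)‖
            ≤ κ * ‖x - y‖ := by
          calc κ * ‖κ⁻¹ • (M x - (1 - κ) • x) - κ⁻¹ • (M y - (1 - κ) • y)‖
              = ‖κ • (κ⁻¹ • (M x - (1 - κ) • x) - κ⁻¹ • (M y - (1 - κ) • y))‖ := by
                rw [norm_smul, Real.norm_eq_abs, abs_of_pos hκ]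
            _ = ‖M (x - y) - (1 - κ) • (x - y)‖ := by rw [hvec]
            _ ≤ κ * ‖x - y‖ := key
        exact le_of_mul_le_mul_left hnn hκ
      · intro x
        rw [smul_inv_smul₀ hκ.ne']
        abel
  -- assemble
  have hk0 : 0 < (3 + s) / 7 := by positivity
  have hk1 : (3 + s) / 7 ≤ 1 := by nlinarith
  constructor
  · constructor
    · refine ⟨⟨hk0.le, hk1⟩, ?_⟩
      exact (hAvg _ hk0).mpr ((hP _ hk0 hk1).mpr le_rfl)
    · rintro κ ⟨⟨hκ0, hκ1⟩, hav⟩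
      rcases eq_or_lt_of_le hκ0 with h0 | h0
      · exfalso
        obtain ⟨N, hN, hNeq⟩ := hav
        have := hNeq (EuclideanSpace.single 1 (1:ℝ))
        rw [← h0] at this
        simp only [sub_zero, one_smul, zero_smul, add_zero] at this
        have h1 := congrArg (· 1) this
        rw [hMz] at h1
        simp [EuclideanSpace.single_apply] at h1
      · exact (hP κ h0 hκ1).mp ((hAvg κ h0).mp hav)
  · intro κ hκ
    exact hP κ hκ.1 hκ.2
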